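/- Let ζ ∈ ℝ^I satisfy ζ_i > 0 for all i ∈ I. Then every ζ-semistable framed quiver representation (B, i, j) is ζ-stable. Equivalently, (B, i, j) is ζ-semistable if and only if the only B-invariant I-graded subspace S ⊆ Ker j is S = 0. -/

import Mathlib

lemma aux_bot {I : Type} [Fintype I] {V : I → Type}
    [∀ k, AddCommGroup (V k)] [∀ k, Module ℂ (V k)] [∀ k, FiniteDimensional ℂ (V k)]
    (ζ : I → ℝ) (hζ : ∀ k, 0 < ζ k) (S : ∀ k, Submodule ℂ (V k))
    (hsum : ∑ k : I, ζ k * (Module.finrank ℂ (S k) : ℝ) ≤ 0) : ∀ k, S k = ⊥ := by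
  have hnn : ∀ k ∈ Finset.univ, 0 ≤ ζ k * (Module.finrank ℂ (S k) : ℝ) := fun k _ =>
    mul_nonneg (hζ k).le (Nat.cast_nonneg _)
  have hz := (Finset.sum_eq_zero_iff_of_nonneg hnn).mp
    (le_antisymm hsum (Finset.sum_nonneg hnn))
  intro k
  have := hz k (Finset.mem_univ k)
  have h0 : (Module.finrank ℂ (S k) : ℝ) = 0 := by
    rcases mul_eq_zero.mp this with h | h
    · exact absurd h (hζ k).ne'
    · exact h
  have h1 : Module.finrank ℂ (S k) = 0 := by exact_mod_cast h0
  exact Submodule.finrank_eq_zero.mp h1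

/-- For a positive stability parameter ζ, every ζ-semistable framed
quiver representation is ζ-stable; equivalently, (B,i,j) is ζ-semistable iff the
only B-invariant I-graded subspace contained in Ker j is zero. -/
theorem stmt_1 {I A : Type} [Fintype I] (t h : A → I) (V W : I → Type)
    [∀ k, AddCommGroup (V k)] [∀ k, Module ℂ (V k)] [∀ k, FiniteDimensional ℂ (V k)]
    [∀ k, AddCommGroup (W k)] [∀ k, Module ℂ (W k)]
    (B : ∀ a : A, V (t a) →ₗ[ℂ] V (h a))
    (i : ∀ k, W k →ₗ[ℂ] V k) (j : ∀ k, V k →ₗ[ℂ] W k)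
    (ζ : I → ℝ) (hζ : ∀ k, 0 < ζ k) :
    (((∀ S : ∀ k, Submodule ℂ (V k),
          (∀ a, (S (t a)).map (B a) ≤ S (h a)) →
          (∀ k, S k ≤ LinearMap.ker (j k)) →
          ∑ k : I, ζ k * (Module.finrank ℂ (S k) : ℝ) ≤ 0) ∧
      (∀ T : ∀ k, Submodule ℂ (V k),
          (∀ a, (T (t a)).map (B a) ≤ T (h a)) →
          (∀ k, LinearMap.range (i k) ≤ T k) →
          ∑ k : I, ζ k * (Module.finrank ℂ (T k) : ℝ)
            ≤ ∑ k : I, ζ k * (Module.finrank ℂ (V k) : ℝ))) →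
      ((∀ S : ∀ k, Submodule ℂ (V k),
          (∀ a, (S (t a)).map (B a) ≤ S (h a)) →
          (∀ k, S k ≤ LinearMap.ker (j k)) →
          (¬ ∀ k, S k = ⊥) →
          ∑ k : I, ζ k * (Module.finrank ℂ (S k) : ℝ) < 0) ∧
       (∀ T : ∀ k, Submodule ℂ (V k),
          (∀ a, (T (t a)).map (B a) ≤ T (h a)) →
          (∀ k, LinearMap.range (i k) ≤ T k) →
          (¬ ∀ k, T k = ⊤) →
          ∑ k : I, ζ k * (Module.finrank ℂ (T k) : ℝ)
            < ∑ k : I, ζ k * (Module.finrank ℂ (V k) : ℝ)))) ∧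
    (((∀ S : ∀ k, Submodule ℂ (V k),
          (∀ a, (S (t a)).map (B a) ≤ S (h a)) →
          (∀ k, S k ≤ LinearMap.ker (j k)) →
          ∑ k : I, ζ k * (Module.finrank ℂ (S k) : ℝ) ≤ 0) ∧
      (∀ T : ∀ k, Submodule ℂ (V k),
          (∀ a, (T (t a)).map (B a) ≤ T (h a)) →
          (∀ k, LinearMap.range (i k) ≤ T k) →
          ∑ k : I, ζ k * (Module.finrank ℂ (T k) : ℝ)
            ≤ ∑ k : I, ζ k * (Module.finrank ℂ (V k) : ℝ))) ↔
      (∀ S : ∀ k, Submodule ℂ (V k),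
          (∀ a, (S (t a)).map (B a) ≤ S (h a)) →
          (∀ k, S k ≤ LinearMap.ker (j k)) →
          ∀ k, S k = ⊥)) := by
  have hTstrict : ∀ T : ∀ k, Submodule ℂ (V k), (¬ ∀ k, T k = ⊤) →
      ∑ k : I, ζ k * (Module.finrank ℂ (T k) : ℝ)
        < ∑ k : I, ζ k * (Module.finrank ℂ (V k) : ℝ) := by
    intro T hT
    push_neg at hT
    obtain ⟨k₀, hk₀⟩ := hT
    exact Finset.sum_lt_sum
      (fun k _ => mul_le_mul_of_nonneg_left
        (Nat.cast_le.mpr (Submodule.finrank_le (T k))) (hζ k).le)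
      ⟨k₀, Finset.mem_univ k₀, mul_lt_mul_of_pos_left
        (Nat.cast_lt.mpr (Submodule.finrank_lt hk₀)) (hζ k₀)⟩
  have hTle : ∀ T : ∀ k, Submodule ℂ (V k),
      ∑ k : I, ζ k * (Module.finrank ℂ (T k) : ℝ)
        ≤ ∑ k : I, ζ k * (Module.finrank ℂ (V k) : ℝ) := by
    intro T
    exact Finset.sum_le_sum fun k _ => mul_le_mul_of_nonneg_left
      (Nat.cast_le.mpr (Submodule.finrank_le (T k))) (hζ k).le
  constructor
  · rintro ⟨hS, _⟩
    refine ⟨?_, fun T _ _ hT => hTstrict T hT⟩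
    intro S hinv hker hne
    exact absurd (aux_bot ζ hζ S (hS S hinv hker)) hne
  · constructor
    · rintro ⟨hS, _⟩ S hinv hker
      exact aux_bot ζ hζ S (hS S hinv hker)
    · intro honly
      refine ⟨?_, fun T _ _ => hTle T⟩
      intro S hinv hker
      have := honly S hinv hker
      have : ∀ k ∈ Finset.univ, ζ k * (Module.finrank ℂ (S k) : ℝ) = 0 := by
        intro k _
        rw [this k]
        simp
      rw [Finset.sum_congr rfl this]
      simp
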